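/- Let q ≥ 1, β ∈ (0,1) with β^{q+1} ≤ 1/2, and R > 0. Set D_β = 2(q+1)·ln(1/β) and R_0 = R/D_β. Then for all x₁, x₂ with 0 ≤ x₁ ≤ x₂ ≤ R/2, we have F(x₂) − F(x₁) ≤ D_β·((x₂ − x₁)/R)·(1 − F(x₁) + 2·β^{q+1}). -/

import Mathlib

/-- Let `q ≥ 1`, `β ∈ (0,1)` with `β^{q+1} ≤ 1/2`, `R > 0`,
`D_β = 2(q+1)ln(1/β)`, `R₀ = R/D_β`. With
`F(x) = (1 − e^{−x/R₀})/(1 − e^{−R/(2R₀)})`, for all `0 ≤ x₁ ≤ x₂ ≤ R/2` we have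
`F(x₂) − F(x₁) ≤ D_β ((x₂ − x₁)/R)(1 − F(x₁) + 2β^{q+1})`. -/
theorem stmt13 (q β R Dβ R0 : ℝ) (hq : 1 ≤ q) (hβ : β ∈ Set.Ioo (0 : ℝ) 1)
    (hβq : β ^ (q + 1) ≤ 1 / 2) (hR : 0 < R)
    (hD : Dβ = 2 * (q + 1) * Real.log (1 / β)) (hR0 : R0 = R / Dβ)
    (F : ℝ → ℝ)
    (hF : ∀ x, F x = (1 - Real.exp (-x / R0)) / (1 - Real.exp (-R / (2 * R0)))) :
    ∀ x₁ x₂ : ℝ, 0 ≤ x₁ → x₁ ≤ x₂ → x₂ ≤ R / 2 →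
      F x₂ - F x₁ ≤ Dβ * ((x₂ - x₁) / R) * (1 - F x₁ + 2 * β ^ (q + 1)) := by
  intro x₁ x₂ hx1 hx12 hx2
  obtain ⟨hβ0, hβ1⟩ := hβ
  have hlogβ : Real.log β < 0 := Real.log_neg hβ0 hβ1
  have hq1 : 0 < q + 1 := by linarith
  have hDβ : 0 < Dβ := by
    rw [hD, one_div, Real.log_inv]; nlinarith
  have hR0pos : 0 < R0 := by rw [hR0]; positivity
  have hp0 : 0 < β ^ (q + 1) := Real.rpow_pos_of_pos hβ0 _
  have hkey : Real.exp (-R / (2 * R0)) = β ^ (q + 1) := by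
    rw [Real.rpow_def_of_pos hβ0]
    congr 1
    rw [hR0, hD, one_div, Real.log_inv]
    field_simp
  set p := β ^ (q + 1) with hp
  set a := Real.exp (-x₁ / R0) with ha
  set b := Real.exp (-x₂ / R0) with hb
  set s := (x₂ - x₁) / R0 with hsdef
  have hs : 0 ≤ s := by
    apply div_nonneg (by linarith) hR0pos.le
  have hba : b = a * Real.exp (-s) := by
    rw [ha, hb, ← Real.exp_add]
    congr 1
    rw [hsdef]
    ring
  have hab : a - b ≤ s * a := by
    have h1 : 1 - s ≤ Real.exp (-s) := by
      have := Real.add_one_le_exp (-s); linarith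
    have ha0 : 0 < a := Real.exp_pos _
    rw [hba]
    nlinarith
  have hpb : p ≤ b := by
    rw [← hkey, hb]
    apply Real.exp_le_exp.mpr
    rw [div_le_div_iff₀ (by positivity) hR0pos]
    nlinarith
  have ha1 : a ≤ 1 := by
    rw [ha]
    calc Real.exp (-x₁ / R0) ≤ Real.exp 0 := by
          apply Real.exp_le_exp.mpr
          apply div_nonpos_of_nonpos_of_nonneg (by linarith) hR0pos.le
      _ = 1 := Real.exp_zero
  have hrw : Dβ * ((x₂ - x₁) / R) = s := by
    rw [hsdef, hR0]
    field_simp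
  rw [hF, hF, hkey, hrw]
  have hcpos : (0 : ℝ) < 1 - p := by linarith
  rw [div_sub_div_same]
  rw [div_le_iff₀ hcpos]
  have h2 : (1 - a) / (1 - p) * (1 - p) = 1 - a := div_mul_cancel₀ _ hcpos.ne'
  have hkey2 : a - b ≤ s * (a + p * (1 - 2 * p)) := by
    nlinarith [mul_nonneg hs (mul_nonneg hp0.le (by linarith : (0:ℝ) ≤ 1 - 2 * p))]
  nlinarith [hkey2, mul_nonneg hs hp0.le]
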